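/- Let m ≥ 0. For x ∈ ℍᵐ and y ∈ ℍ with star y = −y, set q(x, y) = 1 + xᴴx/2 − y/2 ∈ ℍ. Then q(x, y) ≠ 0, and the Cayley transform 𝒞(x, y) = (√2 · x · q(x,y)⁻¹, (1 − xᴴx/2 + y/2) · q(x,y)⁻¹) (each coordinate of the first entry multiplied on the right by q(x,y)⁻¹) is an injective map from {(x, y) ∈ ℍᵐ × ℍ : star y = −y} into ℍᵐ × ℍ whose image is exactly the punctured unit sphere {(z, w) ∈ ℍᵐ × ℍ : Σᵢ |zᵢ|² + |w|² = 1} \ {(0, −1)}. -/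

import Mathlib

open scoped Quaternion

open Quaternion


private lemma sumStar {m : ℕ} (x : Fin m → ℍ[ℝ]) :
    (∑ j, star (x j) * x j) = ((∑ j, normSq (x j) : ℝ) : ℍ[ℝ]) := by
  simp only [Quaternion.star_mul_self]
  exact (map_sum (algebraMap ℝ ℍ[ℝ]) _ _).symm

private lemma htwoQ : (2:ℍ[ℝ]) ≠ 0 := by
  intro h; have h' := congrArg QuaternionAlgebra.re h
  rw [← one_add_one_eq_two] at h'; simp [Quaternion.re_add] at h'

private lemma half1 (a b : ℍ[ℝ]) : 1 + a/2 - (a + 2 - 2*b)/2 = b := by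
  have h2 : (2:ℍ[ℝ]) ≠ 0 := htwoQ
  rw [add_sub_assoc, div_sub_div_same,
    show a - (a+2-2*b) = b*2 - 2 by noncomm_ring, sub_div,
    mul_div_cancel_right₀ _ h2, div_self h2]
  noncomm_ring

private lemma half2 (a b : ℍ[ℝ]) : 1 - a/2 + (a + 2 - 2*b)/2 = 2 - b := by
  have h2 : (2:ℍ[ℝ]) ≠ 0 := htwoQ
  rw [sub_add, div_sub_div_same,
    show a - (a+2-2*b) = b*2 - 2 by noncomm_ring, sub_div,
    mul_div_cancel_right₀ _ h2, div_self h2, ← one_add_one_eq_two]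
  abel

private lemma divtwo (a : ℍ[ℝ]) : a / 2 = (2⁻¹ : ℝ) • a := by
  rw [div_eq_mul_inv, show ((2:ℍ[ℝ]) = ((2:ℝ):ℍ[ℝ])) by norm_cast, ← Quaternion.coe_inv,
    Quaternion.mul_coe_eq_smul]

private lemma normSq_smul' (r : ℝ) (a : ℍ[ℝ]) : normSq (r • a) = r^2 * normSq a := by
  simp only [normSq_def', Quaternion.re_smul, Quaternion.imI_smul, Quaternion.imJ_smul,
    Quaternion.imK_smul, smul_eq_mul]
  ring

/-- `normSq (↑r + y/2) = r² + normSq y / 4` when `y.re = 0`. -/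
private lemma normSq_coe_add_half (r : ℝ) (y : ℍ[ℝ]) (hy : y.re = 0) :
    normSq ((r:ℍ[ℝ]) + y/2) = r^2 + normSq y / 4 := by
  simp only [normSq_def', divtwo, Quaternion.re_add, Quaternion.imI_add, Quaternion.imJ_add,
    Quaternion.imK_add, Quaternion.re_coe, Quaternion.imI_coe, Quaternion.imJ_coe,
    Quaternion.imK_coe, Quaternion.re_smul, Quaternion.imI_smul, Quaternion.imJ_smul,
    Quaternion.imK_smul, smul_eq_mul, hy]
  ring

private lemma qform (S : ℝ) (y : ℍ[ℝ]) :
    1 + (S:ℍ[ℝ])/2 - y/2 = ((1+S/2 : ℝ):ℍ[ℝ]) + (-y)/2 := by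
  push_cast
  rw [show ((2:ℝ):ℍ[ℝ]) = 2 by norm_cast, neg_div, ← sub_eq_add_neg]

private lemma qform2 (S : ℝ) (y : ℍ[ℝ]) :
    2 - (1 + (S:ℍ[ℝ])/2 - y/2) = ((1-S/2 : ℝ):ℍ[ℝ]) + y/2 := by
  push_cast
  rw [show ((2:ℝ):ℍ[ℝ]) = 2 by norm_cast, show (2:ℍ[ℝ]) = 1+1 from (one_add_one_eq_two).symm]
  abel

private lemma normsq_norm (a : ℍ[ℝ]) : ‖a‖^2 = normSq a := by
  rw [sq, ← normSq_eq_norm_mul_self]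

private lemma sqrt2_ne : (Real.sqrt 2) ≠ 0 := by positivity

/-- the quaternion `q(x,y)` is nonzero -/
private lemma qne {m : ℕ} (x : Fin m → ℍ[ℝ]) (y : ℍ[ℝ]) (hy : star y = -y) :
    1 + (∑ j, star (x j) * x j) / 2 - y / 2 ≠ 0 := by
  have hyre : y.re = 0 := Quaternion.star_eq_neg.mp hy
  have hS : (0:ℝ) ≤ ∑ j, normSq (x j) :=
    Finset.sum_nonneg fun j _ => normSq_nonneg
  rw [sumStar, qform]
  intro h
  have h' := congrArg QuaternionAlgebra.re h
  simp only [Quaternion.re_add, Quaternion.re_coe, divtwo, Quaternion.re_smul,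
    Quaternion.re_neg, hyre, Quaternion.re_zero, smul_eq_mul] at h'
  nlinarith [h']

private lemma qflip (s y : ℍ[ℝ]) : 1 - s/2 + y/2 = 2 - (1 + s/2 - y/2) := by
  rw [← one_add_one_eq_two]; abel

private lemma coe2 : ((2:ℝ):ℍ[ℝ]) = 2 := by norm_cast

private lemma two_comm (a : ℍ[ℝ]) : (2:ℍ[ℝ]) * a = a * 2 := by
  rw [← coe2]; exact Quaternion.coe_commutes _ _

/-- The Cayley transform `𝒞(x, y) = (√2 x q⁻¹, (1 − xᴴx/2 + y/2) q⁻¹)` with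
`q = q(x, y) = 1 + xᴴx/2 − y/2`, defined on pairs `(x, y)` with `y` purely imaginary. -/
noncomputable def cayley (m : ℕ)
    (p : {p : (Fin m → ℍ[ℝ]) × ℍ[ℝ] // star p.2 = -p.2}) :
    (Fin m → ℍ[ℝ]) × ℍ[ℝ] :=
  (fun i => (Real.sqrt 2 : ℝ) • p.1.1 i *
      (1 + (∑ j, star (p.1.1 j) * p.1.1 j) / 2 - p.1.2 / 2)⁻¹,
    (1 - (∑ j, star (p.1.1 j) * p.1.1 j) / 2 + p.1.2 / 2) *
      (1 + (∑ j, star (p.1.1 j) * p.1.1 j) / 2 - p.1.2 / 2)⁻¹)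

set_option maxHeartbeats 1000000 in
/-- Section 1.1 (Bruhat decomposition): `q(x, y) = 1 + xᴴx/2 − y/2` never vanishes,
and the Cayley transform is an injection of the quaternionic Heisenberg group
`{(x, y) : star y = −y}` onto the unit sphere of `ℍᵐ × ℍ` minus the point `(0, −1)`. -/
theorem stmt7 (m : ℕ) :
    (∀ x : Fin m → ℍ[ℝ], ∀ y : ℍ[ℝ], star y = -y →
        1 + (∑ j, star (x j) * x j) / 2 - y / 2 ≠ 0) ∧
    Function.Injective (cayley m) ∧
    Set.range (cayley m) =
      {q : (Fin m → ℍ[ℝ]) × ℍ[ℝ] | (∑ i, ‖q.1 i‖ ^ 2) + ‖q.2‖ ^ 2 = 1} \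
        {((0 : Fin m → ℍ[ℝ]), (-1 : ℍ[ℝ]))} := by
  refine ⟨fun x y hy => qne x y hy, ?_, ?_⟩
  · -- Injectivity
    rintro ⟨⟨x, y⟩, hy⟩ ⟨⟨x', y'⟩, hy'⟩ h
    have hqne := qne x y hy
    have hq'ne := qne x' y' hy'
    simp only [cayley, Prod.mk.injEq] at h
    obtain ⟨h1, h2⟩ := h
    rw [qflip, qflip] at h2
    have e2 : 2 * (1 + (∑ j, star (x j) * x j) / 2 - y / 2)⁻¹ - 1
        = 2 * (1 + (∑ j, star (x' j) * x' j) / 2 - y' / 2)⁻¹ - 1 := by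
      calc 2 * (1 + (∑ j, star (x j) * x j) / 2 - y / 2)⁻¹ - 1
          = (2 - (1 + (∑ j, star (x j) * x j) / 2 - y / 2))
              * (1 + (∑ j, star (x j) * x j) / 2 - y / 2)⁻¹ := by
            rw [sub_mul, mul_inv_cancel₀ hqne]
        _ = (2 - (1 + (∑ j, star (x' j) * x' j) / 2 - y' / 2))
              * (1 + (∑ j, star (x' j) * x' j) / 2 - y' / 2)⁻¹ := h2
        _ = 2 * (1 + (∑ j, star (x' j) * x' j) / 2 - y' / 2)⁻¹ - 1 := by
            rw [sub_mul, mul_inv_cancel₀ hq'ne]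
    have eq : (1 + (∑ j, star (x j) * x j) / 2 - y / 2)
        = (1 + (∑ j, star (x' j) * x' j) / 2 - y' / 2) :=
      inv_injective (mul_left_cancel₀ htwoQ (sub_left_inj.mp e2))
    have hx : x = x' := by
      funext i
      have hz := congrFun h1 i
      rw [← eq] at hz
      have h3 := mul_right_cancel₀ (inv_ne_zero hqne) hz
      exact smul_right_injective ℍ[ℝ] sqrt2_ne h3
    have hyy : y = y' := by
      rw [hx] at eq
      have h4 : y / 2 = y' / 2 := sub_right_inj.mp eq
      calc y = y / 2 * 2 := (div_mul_cancel₀ y htwoQ).symm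
        _ = y' / 2 * 2 := by rw [h4]
        _ = y' := div_mul_cancel₀ y' htwoQ
    exact Subtype.ext (Prod.ext hx hyy)
  · -- Range
    ext zw
    simp only [Set.mem_range, Set.mem_diff, Set.mem_setOf_eq, Set.mem_singleton_iff]
    constructor
    · rintro ⟨⟨⟨x, y⟩, hy⟩, rfl⟩
      have hyre : y.re = 0 := Quaternion.star_eq_neg.mp hy
      have hqne0 := qne x y hy
      simp only [cayley]
      set S : ℝ := ∑ j, normSq (x j) with hSdef
      have hs : (∑ j, star (x j) * x j) = (S:ℍ[ℝ]) := sumStar x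
      have hq : (1 + (S:ℍ[ℝ])/2 - y/2) ≠ 0 := by rw [← hs]; exact hqne0
      have hnq : normSq (1 + (S:ℍ[ℝ])/2 - y/2) = (1+S/2)^2 + normSq y / 4 := by
        rw [qform, normSq_coe_add_half _ _ (by simp [hyre]), normSq_neg]
      have hn2 : normSq (2 - (1 + (S:ℍ[ℝ])/2 - y/2)) = (1-S/2)^2 + normSq y / 4 := by
        rw [qform2, normSq_coe_add_half _ _ hyre]
      have hnqne : normSq (1 + (S:ℍ[ℝ])/2 - y/2) ≠ 0 := normSq_ne_zero.2 hq
      constructor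
      · -- on the sphere
        rw [hs, qflip]
        have e1 : ∀ i, ‖(Real.sqrt 2 : ℝ) • x i * (1 + (S:ℍ[ℝ])/2 - y/2)⁻¹‖^2
            = 2 * normSq (x i) * (normSq (1 + (S:ℍ[ℝ])/2 - y/2))⁻¹ := by
          intro i
          rw [normsq_norm, map_mul, map_inv₀, normSq_smul', Real.sq_sqrt (by norm_num : (0:ℝ) ≤ 2)]
        simp only [e1]
        rw [normsq_norm, map_mul, map_inv₀, ← Finset.sum_mul, ← Finset.mul_sum, ← hSdef,
          hnq, hn2, ← add_mul]
        rw [show 2 * S + ((1-S/2)^2 + normSq y / 4) = (1+S/2)^2 + normSq y / 4 by ring]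
        rw [mul_inv_cancel₀ (by rw [← hnq]; exact hnqne)]
      · -- not the south pole
        intro hcon
        have h2 := congrArg Prod.snd hcon
        simp only at h2
        rw [hs, qflip] at h2
        have h3 := congrArg (· * (1 + (S:ℍ[ℝ])/2 - y/2)) h2
        simp only [mul_assoc, inv_mul_cancel₀ hq, mul_one, neg_one_mul] at h3
        have h4 : (2:ℍ[ℝ]) = 0 := by
          have := congrArg (· + (1 + (S:ℍ[ℝ])/2 - y/2)) h3
          simpa [sub_add_cancel] using this
        exact htwoQ h4
    · rintro ⟨hsph, hne⟩
      obtain ⟨z, w⟩ := zw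
      simp only at hsph ⊢
      have h1w : (1:ℍ[ℝ]) + w ≠ 0 := by
        intro h
        have hw : w = -1 := by
          have := eq_neg_of_add_eq_zero_right h
          simpa using this
        subst hw
        have hzsum : (∑ i, ‖z i‖^2) = 0 := by
          simp only [norm_neg, norm_one, one_pow] at hsph
          linarith
        have hz : z = 0 := by
          funext i
          have := (Finset.sum_eq_zero_iff_of_nonneg
            (fun i _ => sq_nonneg ‖z i‖)).mp hzsum i (Finset.mem_univ i)
          have : ‖z i‖ = 0 := by
            have := sq_eq_zero_iff.mp this
            exact this
          simpa using norm_eq_zero.mp this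
        exact hne (by rw [hz])
      have hN : normSq ((1:ℍ[ℝ]) + w) ≠ 0 := normSq_ne_zero.2 h1w
      set q0 : ℍ[ℝ] := 2 * (1+w)⁻¹ with hq0def
      have hq0ne : q0 ≠ 0 := mul_ne_zero htwoQ (inv_ne_zero h1w)
      set x : Fin m → ℍ[ℝ] := fun i => (Real.sqrt 2)⁻¹ • (z i * q0) with hxdef
      set S : ℝ := ∑ j, normSq (x j) with hSdef
      set y : ℍ[ℝ] := (S:ℍ[ℝ]) + 2 - 2*q0 with hydef
      have hnq0 : normSq q0 = 4 * (normSq (1+w))⁻¹ := by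
        rw [hq0def, map_mul, map_inv₀, ← coe2, normSq_coe]
        norm_num
      have hzw : (∑ j, normSq (z j)) = 1 - normSq w := by
        have : ∀ j, ‖z j‖^2 = normSq (z j) := fun j => normsq_norm _
        simp only [this, normsq_norm] at hsph
        linarith
      have hSval : S = 2 * (1 - normSq w) * (normSq (1+w))⁻¹ := by
        rw [hSdef]
        have e : ∀ j, normSq (x j) = 2⁻¹ * normSq (z j) * normSq q0 := by
          intro j
          rw [hxdef]
          simp only
          rw [normSq_smul', map_mul]
          have : ((Real.sqrt 2)⁻¹)^2 = 2⁻¹ := by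
            rw [inv_pow, Real.sq_sqrt (by norm_num : (0:ℝ) ≤ 2)]
          rw [this]; ring
        simp only [e]
        rw [← Finset.sum_mul, ← Finset.mul_sum, hzw, hnq0]
        ring
      have hware : normSq ((1:ℍ[ℝ])+w) = 1 + 2*w.re + normSq w := by
        simp only [normSq_def', Quaternion.re_add, Quaternion.imI_add, Quaternion.imJ_add,
          Quaternion.imK_add, Quaternion.re_one, Quaternion.imI_one, Quaternion.imJ_one,
          Quaternion.imK_one]
        ring
      have hq0re : q0.re = 2 * ((normSq ((1:ℍ[ℝ])+w))⁻¹ * (1 + w.re)) := by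
        rw [hq0def, ← coe2, Quaternion.coe_mul_eq_smul, Quaternion.re_smul,
          Quaternion.inv_def, Quaternion.re_smul, Quaternion.re_star,
          Quaternion.re_add, Quaternion.re_one]
        simp [smul_eq_mul]
      have hyre : y.re = 0 := by
        rw [hydef]
        simp only [Quaternion.re_sub, Quaternion.re_add, Quaternion.re_coe]
        rw [show ((2:ℍ[ℝ])*q0).re = 2 * q0.re by
          rw [← coe2, Quaternion.coe_mul_eq_smul, Quaternion.re_smul, smul_eq_mul]]
        rw [show ((2:ℍ[ℝ])).re = (2:ℝ) by rw [← coe2, Quaternion.re_coe]]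
        rw [hq0re, hSval, hware]
        have hNne : (1:ℝ) + 2*w.re + normSq w ≠ 0 := by rw [← hware]; exact hN
        field_simp
        ring
      have hsy : star y = -y := Quaternion.star_eq_neg.mpr hyre
      refine ⟨⟨⟨x, y⟩, hsy⟩, ?_⟩
      have hsum : (∑ j, star (x j) * x j) = (S:ℍ[ℝ]) := by rw [sumStar, ← hSdef]
      have hqeq : 1 + (∑ j, star (x j) * x j)/2 - y/2 = q0 := by
        rw [hsum, hydef]; exact half1 _ _
      have hq0inv : q0⁻¹ = (1+w) * (2:ℍ[ℝ])⁻¹ := by rw [hq0def, mul_inv_rev, inv_inv]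
      simp only [cayley]
      refine Prod.ext (funext fun i => ?_) ?_
      · simp only
        rw [hqeq, hxdef]
        simp only
        rw [smul_smul, mul_inv_cancel₀ sqrt2_ne, one_smul, mul_assoc,
          mul_inv_cancel₀ hq0ne, mul_one]
      · simp only
        rw [hqeq, hsum, hydef, half2, sub_mul, mul_inv_cancel₀ hq0ne, hq0inv,
          ← mul_assoc, two_comm (1+w), mul_assoc, mul_inv_cancel₀ htwoQ, mul_one,
          add_sub_cancel_left]
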